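/- Let f_n, f be non-increasing non-negative càdlàg functions on [0,∞) such that f_n → f in the Skorokhod (J1) sense. Set t_n = inf{s ≥ 0 : f_n(s) = 0} and t = inf{s ≥ 0 : f(s) = 0}, and assume t < ∞ and t_n → t. If f(t−) > 0 and liminf_n f_n(t_n−) > 0, then f_n(t_n−) → f(t−). (Here h(s−) denotes the left limit of h at s > 0, with the convention h(0−) := h(0).) -/

import Mathlib

open MeasureTheory Filter Set
open scoped ENNReal NNReal
open scoped Topology

/-- A function is càdlàg on `[0,∞)`: right-continuous at every `t ≥ 0` and
with left limits at every `t > 0`. -/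
def Cadlag (f : ℝ → ℝ) : Prop :=
  (∀ t : ℝ, 0 ≤ t → ContinuousWithinAt f (Set.Ici t) t) ∧
  ∀ t : ℝ, 0 < t → ∃ l : ℝ, Filter.Tendsto f (nhdsWithin t (Set.Iio t)) (nhds l)

/-- First hitting time of `0`: `T₀(h) = inf{t ≥ 0 : h(t) = 0}`, in `[0,∞]`. -/
noncomputable def hit0 (h : ℝ → ℝ) : ℝ≥0∞ :=
  sInf ((fun v : ℝ => ENNReal.ofReal v) '' {t : ℝ | 0 ≤ t ∧ h t = 0})

/-- Skorokhod (J1) convergence of càdlàg functions from `[0,∞)` to `ℝ`: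
there exist continuous strictly increasing bijections `λₙ` of `[0,∞)` such that
`λₙ → id` and `hₙ ∘ λₙ → h` uniformly on every compact set. -/
def SkorokhodTendsto (h : ℕ → ℝ → ℝ) (l : ℝ → ℝ) : Prop :=
  ∃ lam : ℕ → ℝ → ℝ,
    (∀ n, ContinuousOn (lam n) (Set.Ici 0) ∧ StrictMonoOn (lam n) (Set.Ici 0) ∧
      Set.BijOn (lam n) (Set.Ici 0) (Set.Ici 0)) ∧
    (∀ T : ℝ, 0 < T →
      TendstoUniformlyOn (fun n t => lam n t) id atTop (Set.Icc 0 T)) ∧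
    (∀ T : ℝ, 0 < T →
      TendstoUniformlyOn (fun n t => h n (lam n t)) l atTop (Set.Icc 0 T))

/-- Left limit of `h` at `s`, with the convention `h(0−) := h(0)` (and the same
junk convention for `s < 0`). -/
noncomputable def leftLimC (h : ℝ → ℝ) (s : ℝ) : ℝ :=
  if s ≤ 0 then h 0 else Function.leftLim h s

/-- A càdlàg function tends to its left limit from the left at any `x > 0`. -/
lemma tendsto_leftLim_of_cadlag {h : ℝ → ℝ} (hc : Cadlag h) {x : ℝ} (hx : 0 < x) :
    Tendsto h (nhdsWithin x (Set.Iio x)) (nhds (Function.leftLim h x)) := by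
  obtain ⟨l, hl⟩ := hc.2 x hx
  have hne : 𝓝[<] x ≠ ⊥ := (inferInstance : (𝓝[<] x).NeBot).ne
  rw [leftLim_eq_of_tendsto hl]
  exact hl

/-- A non-increasing, non-negative, right-continuous function vanishes at its
(finite) first hitting time of `0`. -/
lemma hit_zero {h : ℝ → ℝ} (hc : Cadlag h)
    (hnn : ∀ s : ℝ, 0 ≤ s → 0 ≤ h s)
    (hmono : ∀ s u : ℝ, 0 ≤ s → s ≤ u → h u ≤ h s)
    (hfin : hit0 h ≠ ∞) : h ((hit0 h).toReal) = 0 := by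
  set τ := (hit0 h).toReal with hτ
  have hτ0 : (0:ℝ) ≤ τ := ENNReal.toReal_nonneg
  have key : ∀ u : ℝ, τ < u → h u = 0 := by
    intro u hu
    by_contra hne
    have hu0 : (0:ℝ) ≤ u := le_trans hτ0 hu.le
    have hlb : ENNReal.ofReal u ≤ hit0 h := by
      apply le_sInf
      rintro x ⟨s, ⟨hs0, hs⟩, rfl⟩
      apply ENNReal.ofReal_le_ofReal
      by_contra hsu
      push_neg at hsu
      have h1 : h u ≤ h s := hmono s u hs0 hsu.le
      exact hne (le_antisymm (hs ▸ h1) (hnn u hu0))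
    have : u ≤ τ := by
      have h2 := ENNReal.toReal_mono hfin hlb
      rwa [ENNReal.toReal_ofReal hu0] at h2
    exact absurd hu (not_lt.mpr this)
  have h1 : Tendsto h (𝓝[>] τ) (nhds (h τ)) :=
    (hc.1 τ hτ0).tendsto.mono_left (nhdsWithin_mono _ Ioi_subset_Ici_self)
  have h2 : Tendsto h (𝓝[>] τ) (nhds (0:ℝ)) := by
    apply Tendsto.congr' _ tendsto_const_nhds
    filter_upwards [self_mem_nhdsWithin] with s hs
    exact (key s hs).symm
  exact tendsto_nhds_unique h1 h2

/-- The (conventional) left limit of a nonnegative càdlàg function is nonneg. -/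
lemma leftLimC_nonneg {h : ℝ → ℝ} (hc : Cadlag h)
    (hnn : ∀ s : ℝ, 0 ≤ s → 0 ≤ h s) (x : ℝ) : 0 ≤ leftLimC h x := by
  unfold leftLimC
  split_ifs with hx
  · exact hnn 0 le_rfl
  · push_neg at hx
    refine ge_of_tendsto (tendsto_leftLim_of_cadlag hc hx) ?_
    filter_upwards [Ioo_mem_nhdsLT hx] with s hs
    exact hnn s hs.1.le

/-- if non-increasing non-negative càdlàg `fₙ → f` in the Skorokhod
sense, `tₙ = inf{s ≥ 0 : fₙ(s) = 0} → t = inf{s ≥ 0 : f(s) = 0} < ∞`,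
`f(t−) > 0` and `liminf fₙ(tₙ−) > 0`, then `fₙ(tₙ−) → f(t−)`. -/
theorem left_limit_at_absorption_convergence_positive_case
    (fseq : ℕ → ℝ → ℝ) (f : ℝ → ℝ)
    (hseq_nonneg : ∀ n, ∀ s : ℝ, 0 ≤ s → 0 ≤ fseq n s)
    (hseq_mono : ∀ n, ∀ s u : ℝ, 0 ≤ s → s ≤ u → fseq n u ≤ fseq n s)
    (hseq_cadlag : ∀ n, Cadlag (fseq n))
    (hnonneg : ∀ s : ℝ, 0 ≤ s → 0 ≤ f s)
    (hmono : ∀ s u : ℝ, 0 ≤ s → s ≤ u → f u ≤ f s)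
    (hcadlag : Cadlag f)
    (hconv : SkorokhodTendsto fseq f)
    (ht_fin : hit0 f ≠ ∞)
    (ht_conv : Filter.Tendsto (fun n => hit0 (fseq n)) atTop (nhds (hit0 f)))
    (hpos : 0 < leftLimC f ((hit0 f).toReal))
    (hliminf : 0 < Filter.liminf
      (fun n => leftLimC (fseq n) ((hit0 (fseq n)).toReal)) atTop) :
    Filter.Tendsto (fun n => leftLimC (fseq n) ((hit0 (fseq n)).toReal)) atTop
      (nhds (leftLimC f ((hit0 f).toReal))) := by
  obtain ⟨lam, hlam, hlamU, hfU⟩ := hconv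
  set u : ℕ → ℝ := fun n => leftLimC (fseq n) ((hit0 (fseq n)).toReal) with hu
  set t := (hit0 f).toReal with htdef
  have hu_nonneg : ∀ n, 0 ≤ u n := fun n =>
    leftLimC_nonneg (hseq_cadlag n) (hseq_nonneg n) _
  have hft : f t = 0 := hit_zero hcadlag hnonneg hmono ht_fin
  have ht0 : 0 < t := by
    by_contra h
    push_neg at h
    have ht00 : t = 0 := le_antisymm h ENNReal.toReal_nonneg
    have h1 : leftLimC f t = f 0 := by unfold leftLimC; rw [if_pos h]
    rw [h1] at hpos
    rw [ht00] at hft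
    linarith
  have hLC : leftLimC f t = Function.leftLim f t := by
    unfold leftLimC; rw [if_neg (not_le.mpr ht0)]
  set L := Function.leftLim f t with hLdef
  have hLtend : Tendsto f (𝓝[<] t) (nhds L) := tendsto_leftLim_of_cadlag hcadlag ht0
  -- tₙ → t in ℝ
  have htn : Tendsto (fun n => (hit0 (fseq n)).toReal) atTop (nhds t) :=
    (ENNReal.tendsto_toReal ht_fin).comp ht_conv
  -- a positive eventual lower bound for u n
  have hbdd : IsBoundedUnder (· ≥ ·) atTop u := isBoundedUnder_of ⟨0, hu_nonneg⟩
  obtain ⟨c, hc_pos, hc_ev⟩ : ∃ c > 0, ∀ᶠ n in atTop, c < u n :=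
    ⟨_, half_pos hliminf, eventually_lt_of_lt_liminf (half_lt_self hliminf) hbdd⟩
  have hfin_ev : ∀ᶠ n in atTop, hit0 (fseq n) ≠ ∞ :=
    (ht_conv.eventually (eventually_lt_nhds (lt_top_iff_ne_top.mpr ht_fin))).mono
      fun n h => h.ne
  have htn_pos : ∀ᶠ n in atTop, 0 < (hit0 (fseq n)).toReal :=
    htn.eventually (eventually_gt_nhds ht0)
  rw [hLC, Metric.tendsto_nhds]
  intro ε hε
  set η := min (ε / 3) c with hηdef
  have hη : 0 < η := lt_min (by linarith) hc_pos
  have hηε : η ≤ ε / 3 := min_le_left _ _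
  have hηc : η ≤ c := min_le_right _ _
  -- find a₁ ∈ [0, t) such that |f s - L| < η on (a₁, t)
  have hball : f ⁻¹' Metric.ball L η ∈ 𝓝[<] t := hLtend (Metric.ball_mem_nhds L hη)
  rw [mem_nhdsLT_iff_exists_Ioo_subset] at hball
  obtain ⟨a, ha_lt, ha_sub⟩ := hball
  set a₁ := max a 0 with ha₁def
  have ha₁_lt : a₁ < t := max_lt (mem_Iio.mp ha_lt) ht0
  have ha₁_0 : (0:ℝ) ≤ a₁ := le_max_right _ _
  have hf_close : ∀ s : ℝ, a₁ < s → s < t → |f s - L| < η := by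
    intro s h1 h2
    have hmem : s ∈ Ioo a t := ⟨lt_of_le_of_lt (le_max_left a 0) h1, h2⟩
    have := ha_sub hmem
    rwa [mem_preimage, Metric.mem_ball, Real.dist_eq] at this
  set s₀ := (a₁ + t) / 2 with hs₀def
  have hs₀_1 : a₁ < s₀ := by rw [hs₀def]; linarith
  have hs₀_2 : s₀ < t := by rw [hs₀def]; linarith
  have hs₀_0 : (0:ℝ) ≤ s₀ := le_trans ha₁_0 hs₀_1.le
  set T := t + 1 with hTdef
  have hT : 0 < T := by rw [hTdef]; linarith
  have hs₀T : s₀ ∈ Icc (0:ℝ) T := ⟨hs₀_0, by rw [hTdef]; linarith⟩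
  have htT : t ∈ Icc (0:ℝ) T := ⟨ht0.le, by rw [hTdef]; linarith⟩
  have hU2 := (Metric.tendstoUniformlyOn_iff.mp (hfU T hT)) η hη
  have hU1 := (Metric.tendstoUniformlyOn_iff.mp (hlamU T hT)) ((t - s₀) / 2)
    (by linarith)
  have htn_ev : ∀ᶠ n in atTop, |(hit0 (fseq n)).toReal - t| < (t - s₀) / 2 := by
    have := Metric.tendsto_nhds.mp htn ((t - s₀) / 2) (by linarith)
    simpa [Real.dist_eq] using this
  filter_upwards [hfin_ev, htn_pos, hc_ev, hU2, hU1, htn_ev] with n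
    hfin htnpos hcn h2 h1 hclose
  set tn := (hit0 (fseq n)).toReal with htndef
  obtain ⟨hlc, hlm, hlb⟩ := hlam n
  have hlam_nn : ∀ s : ℝ, 0 ≤ s → 0 ≤ lam n s := fun s hs => hlb.mapsTo hs
  have hfn0 : fseq n tn = 0 := hit_zero (hseq_cadlag n) (hseq_nonneg n) (hseq_mono n) hfin
  have hun : u n = Function.leftLim (fseq n) tn := by
    show leftLimC (fseq n) tn = _
    unfold leftLimC; rw [if_neg (not_le.mpr htnpos)]
  have hun_tend : Tendsto (fseq n) (𝓝[<] tn) (nhds (u n)) := by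
    rw [hun]; exact tendsto_leftLim_of_cadlag (hseq_cadlag n) htnpos
  -- λₙ s₀ < tn
  have h1s₀ : |s₀ - lam n s₀| < (t - s₀) / 2 := by
    have := h1 s₀ hs₀T; rwa [Real.dist_eq] at this
  have htn_lb : (s₀ + t) / 2 < tn := by
    have := abs_lt.mp hclose; linarith [this.1]
  have hlam_s₀_lt : lam n s₀ < tn := by
    have := abs_lt.mp h1s₀; linarith [this.1]
  -- upper bound: u n ≤ fseq n (lam n s₀) < f s₀ + η < L + 2η
  have hub : u n ≤ fseq n (lam n s₀) := by
    refine le_of_tendsto hun_tend ?_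
    filter_upwards [Ioo_mem_nhdsLT hlam_s₀_lt] with s hs
    exact hseq_mono n _ _ (hlam_nn s₀ hs₀_0) hs.1.le
  have h2s₀ : |f s₀ - fseq n (lam n s₀)| < η := by
    have := h2 s₀ hs₀T; rwa [Real.dist_eq] at this
  have hfs₀ : |f s₀ - L| < η := hf_close s₀ hs₀_1 hs₀_2
  have hupper : u n < L + 2 * η := by
    have hA := abs_lt.mp h2s₀
    have hB := abs_lt.mp hfs₀
    linarith [hA.1, hB.2]
  -- tn ≤ lam n t
  have htn_le : tn ≤ lam n t := by
    by_contra hlt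
    push_neg at hlt
    have hub' : u n ≤ fseq n (lam n t) := by
      refine le_of_tendsto hun_tend ?_
      filter_upwards [Ioo_mem_nhdsLT hlt] with s hs
      exact hseq_mono n _ _ (hlam_nn t ht0.le) hs.1.le
    have h2t : |f t - fseq n (lam n t)| < η := by
      have := h2 t htT; rwa [Real.dist_eq] at this
    rw [hft] at h2t
    have := abs_lt.mp h2t
    linarith [this.1]
  -- lower bound
  have hlower : L - 2 * η ≤ u n := by
    refine ge_of_tendsto hun_tend ?_
    filter_upwards [Ioo_mem_nhdsLT hlam_s₀_lt] with v hv
    have hv0 : (0:ℝ) ≤ v := le_trans (hlam_nn s₀ hs₀_0) hv.1.le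
    obtain ⟨s, hs0, hsv⟩ := hlb.surjOn (show v ∈ Ici (0:ℝ) from hv0)
    have hs0' : (0:ℝ) ≤ s := hs0
    have hs_gt : s₀ < s := by
      by_contra hle
      push_neg at hle
      have : lam n s ≤ lam n s₀ := hlm.monotoneOn hs0 hs₀_0 hle
      rw [hsv] at this
      linarith [hv.1]
    have hs_lt : s < t := by
      by_contra hge
      push_neg at hge
      have : lam n t ≤ lam n s := hlm.monotoneOn ht0.le hs0 hge
      rw [hsv] at this
      linarith [hv.2]
    have hsT : s ∈ Icc (0:ℝ) T := ⟨hs0', by rw [hTdef]; linarith⟩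
    have h2s : |f s - fseq n v| < η := by
      have := h2 s hsT; rw [Real.dist_eq, hsv] at this; exact this
    have hfs : |f s - L| < η := hf_close s (lt_trans hs₀_1 hs_gt) hs_lt
    have hA := abs_lt.mp h2s
    have hB := abs_lt.mp hfs
    linarith [hA.2, hB.1]
  rw [Real.dist_eq, abs_lt]
  constructor <;> linarith
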